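/- Let W ∈ ℂ^{N×N} be Hermitian positive semidefinite and let h ∈ ℂ^N satisfy h^H W h > 0. Define w = W h / √(h^H W h). Then: (a) |w^H h|² = h^H W h, i.e., the rank-one matrix w w^H satisfies Tr(w w^H h h^H) = Tr(W h h^H); (b) ‖w‖₂² ≤ Tr(W); and (c) for every g ∈ ℂ^N, |w^H g|² ≤ g^H W g, i.e., Tr(w w^H g g^H) ≤ Tr(W g g^H). -/

import Mathlib

open Matrix
open scoped ComplexOrder InnerProductSpace MatrixOrder

lemma dot_sqrt_aux {N : ℕ} (W : Matrix (Fin N) (Fin N) ℂ) (hW : W.PosSemidef)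
    (g h : Fin N → ℂ) :
    star g ⬝ᵥ W.mulVec h = star ((CFC.sqrt W).mulVec g) ⬝ᵥ ((CFC.sqrt W).mulVec h) := by
  rw [star_mulVec, (CFC.sqrt_nonneg W).posSemidef.1, ← dotProduct_mulVec, mulVec_mulVec,
    CFC.sqrt_mul_sqrt_self W hW.nonneg]

lemma psd_dot_real {N : ℕ} (W : Matrix (Fin N) (Fin N) ℂ) (hW : W.PosSemidef)
    (h : Fin N → ℂ) :
    star h ⬝ᵥ W.mulVec h = ((star h ⬝ᵥ W.mulVec h).re : ℂ) := by
  rw [dot_sqrt_aux W hW h h]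
  have := EuclideanSpace.inner_toLp_toLp (𝕜 := ℂ)
    ((CFC.sqrt W).mulVec h) ((CFC.sqrt W).mulVec h)
  rw [dotProduct_comm, ← this, inner_self_eq_norm_sq_to_K]
  norm_cast

lemma cs_psd {N : ℕ} (W : Matrix (Fin N) (Fin N) ℂ) (hW : W.PosSemidef)
    (g h : Fin N → ℂ) :
    ‖star g ⬝ᵥ W.mulVec h‖ ^ 2 ≤
      (star g ⬝ᵥ W.mulVec g).re * (star h ⬝ᵥ W.mulVec h).re := by
  set x : EuclideanSpace ℂ (Fin N) := WithLp.toLp 2 ((CFC.sqrt W).mulVec g)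
  set y : EuclideanSpace ℂ (Fin N) := WithLp.toLp 2 ((CFC.sqrt W).mulVec h)
  have hx : star g ⬝ᵥ W.mulVec g = ⟪x, x⟫_ℂ := by
    rw [dot_sqrt_aux W hW g g, dotProduct_comm, EuclideanSpace.inner_toLp_toLp]
  have hy : star h ⬝ᵥ W.mulVec h = ⟪y, y⟫_ℂ := by
    rw [dot_sqrt_aux W hW h h, dotProduct_comm, EuclideanSpace.inner_toLp_toLp]
  have hxy : star g ⬝ᵥ W.mulVec h = ⟪x, y⟫_ℂ := by
    rw [dot_sqrt_aux W hW g h, dotProduct_comm, EuclideanSpace.inner_toLp_toLp]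
  have hxx : (⟪x, x⟫_ℂ).re = ‖x‖ ^ 2 := by
    rw [inner_self_eq_norm_sq_to_K]; norm_cast
  have hyy : (⟪y, y⟫_ℂ).re = ‖y‖ ^ 2 := by
    rw [inner_self_eq_norm_sq_to_K]; norm_cast
  rw [hx, hy, hxy, hxx, hyy]
  have := norm_inner_le_norm (𝕜 := ℂ) x y
  calc ‖⟪x, y⟫_ℂ‖ ^ 2 = ‖⟪x, y⟫_ℂ‖ ^ 2 := rfl
    _ ≤ (‖x‖ * ‖y‖) ^ 2 := by
        apply pow_le_pow_left₀ (norm_nonneg _) this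
    _ = ‖x‖ ^ 2 * ‖y‖ ^ 2 := by ring

/-- Rank-reduction lemma (underlying Proposition 2): for Hermitian positive
semidefinite `W` and a channel `h` with `hᴴ W h > 0`, the vector
`w = W h / √(hᴴ W h)` yields a rank-one matrix `w wᴴ` that (a) preserves the
desired-signal power `|wᴴ h|² = hᴴ W h`, (b) uses no more power,
`‖w‖₂² ≤ Tr(W)`, and (c) does not increase interference:
`|wᴴ g|² ≤ gᴴ W g` for every `g`. -/
theorem rank_one_reduction {N : ℕ}
    (W : Matrix (Fin N) (Fin N) ℂ) (hW : W.PosSemidef)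
    (h : Fin N → ℂ) (hpos : 0 < (star h ⬝ᵥ W.mulVec h).re)
    (w : Fin N → ℂ)
    (hwdef : w = ((Real.sqrt (star h ⬝ᵥ W.mulVec h).re : ℂ)⁻¹) • W.mulVec h) :
    ‖star w ⬝ᵥ h‖ ^ 2 = (star h ⬝ᵥ W.mulVec h).re ∧
    (star w ⬝ᵥ w).re ≤ (W.trace).re ∧
    ∀ g : Fin N → ℂ,
      ‖star w ⬝ᵥ g‖ ^ 2 ≤ (star g ⬝ᵥ W.mulVec g).re := by
  set s : ℝ := (star h ⬝ᵥ W.mulVec h).re with hs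
  have hsqrt_pos : 0 < Real.sqrt s := Real.sqrt_pos.mpr hpos
  have hsc : star h ⬝ᵥ W.mulVec h = (s : ℂ) := psd_dot_real W hW h
  -- general: for any g, star w ⬝ᵥ g in terms of W h
  have key : ∀ g : Fin N → ℂ,
      ‖star w ⬝ᵥ g‖ ^ 2 = s⁻¹ * ‖star g ⬝ᵥ W.mulVec h‖ ^ 2 := by
    intro g
    rw [hwdef]
    have : star (((Real.sqrt s : ℂ))⁻¹ • W.mulVec h) ⬝ᵥ g
        = ((Real.sqrt s : ℂ))⁻¹ * (star (W.mulVec h) ⬝ᵥ g) := by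
      rw [star_smul, smul_dotProduct]
      simp [star_inv₀]
    rw [this, star_dotProduct, norm_mul, mul_pow,
      show (star (star g ⬝ᵥ W.mulVec h)) = (starRingEnd ℂ) (star g ⬝ᵥ W.mulVec h) from rfl,
      Complex.norm_conj]
    congr 1
    rw [norm_inv, Complex.norm_real, Real.norm_eq_abs, abs_of_pos hsqrt_pos, inv_pow,
      Real.sq_sqrt hpos.le]
  refine ⟨?_, ?_, ?_⟩
  · -- (a)
    rw [key h, hsc]
    rw [Complex.norm_real, Real.norm_eq_abs, abs_of_pos hpos]
    field_simp
  · -- (b)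
    have hdot : (star (W.mulVec h) ⬝ᵥ W.mulVec h)
        = ((∑ i, ‖(W.mulVec h) i‖ ^ 2 : ℝ) : ℂ) := by
      simp only [dotProduct, Pi.star_apply, Complex.star_def,
        ← Complex.normSq_eq_conj_mul_self, ← Complex.sq_norm]
      norm_cast
    have hww : (star w ⬝ᵥ w).re
        = s⁻¹ * ∑ i, ‖(W.mulVec h) i‖ ^ 2 := by
      rw [hwdef, star_smul, smul_dotProduct, dotProduct_smul, hdot]
      simp only [smul_eq_mul, star_inv₀, Complex.star_def, Complex.conj_ofReal]
      rw [← mul_assoc, ← mul_inv, ← Complex.ofReal_mul, Real.mul_self_sqrt hpos.le,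
        ← Complex.ofReal_inv, ← Complex.ofReal_mul, Complex.ofReal_re]
    rw [hww]
    have hbound : ∀ i, ‖(W.mulVec h) i‖ ^ 2 ≤ (W i i).re * s := by
      intro i
      have hstar : star (Pi.single (M := fun _ : Fin N => ℂ) i 1) = Pi.single (M := fun _ : Fin N => ℂ) i 1 := by
        funext j; rcases eq_or_ne j i with rfl | hj <;> simp [Pi.single_apply, *]
      have h1 : (W.mulVec h) i = star (Pi.single i 1) ⬝ᵥ W.mulVec h := by
        rw [hstar, single_dotProduct, one_mul]
      have h2 : star (Pi.single i (1:ℂ)) ⬝ᵥ W.mulVec (Pi.single i 1) = W i i := by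
        rw [hstar, single_dotProduct, one_mul]
        simp [mulVec_single]
      have := cs_psd W hW (Pi.single i 1) h
      rw [h2] at this
      rw [h1]
      exact this
    have hsum : ∑ i, ‖(W.mulVec h) i‖ ^ 2 ≤ (W.trace).re * s := by
      have : (W.trace).re * s = ∑ i, (W i i).re * s := by
        rw [Matrix.trace, Complex.re_sum, Finset.sum_mul]
        rfl
      rw [this]
      exact Finset.sum_le_sum fun i _ => hbound i
    calc s⁻¹ * ∑ i, ‖(W.mulVec h) i‖ ^ 2
        ≤ s⁻¹ * ((W.trace).re * s) :=
          mul_le_mul_of_nonneg_left hsum (inv_nonneg.mpr hpos.le)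
      _ = (W.trace).re := by field_simp
  · -- (c)
    intro g
    rw [key g]
    have := cs_psd W hW g h
    rw [← hs] at this
    calc s⁻¹ * ‖star g ⬝ᵥ W.mulVec h‖ ^ 2
        ≤ s⁻¹ * ((star g ⬝ᵥ W.mulVec g).re * s) := by
          apply mul_le_mul_of_nonneg_left this (inv_nonneg.mpr hpos.le)
      _ = (star g ⬝ᵥ W.mulVec g).re := by field_simp
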